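/- Let M be a divergent skip free martingale, i.e. a skip free process that is a martingale with respect to some filtration F = (F_n)_{n≥0} to which its quadratic variation is adapted, and which satisfies lim_{n→∞} [M]_n = +∞ almost surely. Define τ_0 = 0 and τ_n = inf{k > τ_{n−1} : [M]_k = n}. Then the time-changed process S^M = (M_{τ_n})_{n≥0} is a symmetric Bernoulli random walk (it is an (F_{τ_n})-martingale with increments of absolute value 1, hence has i.i.d. increments uniform on {−1,+1}). -/

import Mathlib

open MeasureTheory ProbabilityTheory Filter Finset
open scoped ENNReal NNReal

noncomputable section

/-- The quadratic variation `[s]_n` of a discrete real-valued path `s`. -/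
def qvR (s : ℕ → ℝ) (n : ℕ) : ℝ :=
  ∑ k ∈ Finset.range n, (s (k + 1) - s k) ^ 2

/-- The successive times at which the quadratic variation of `s` increases:
`τ_0 = 0` and `τ_{n+1} = inf {k > τ_n : [s]_k = n + 1}`, with `inf ∅ = τ_n`. -/
def tauR (s : ℕ → ℝ) : ℕ → ℕ
  | 0 => 0
  | n + 1 => max (tauR s n) (sInf {k | tauR s n < k ∧ qvR s k = (n + 1 : ℝ)})

/-- The time-changed path `S^s = (s_{τ_n})_n`. -/
def SMR (s : ℕ → ℝ) : ℕ → ℝ := fun n => s (tauR s n)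

/-- A skip free path: starts at `0` and has increments in `{-1, 0, 1}`. -/
def SkipFreePathR (s : ℕ → ℝ) : Prop :=
  s 0 = 0 ∧ ∀ n, s (n + 1) - s n = 1 ∨ s (n + 1) - s n = 0 ∨ s (n + 1) - s n = -1

/-- The uniform law on `{-1, +1} ⊆ ℝ`. -/
def bernR : Measure ℝ :=
  (2 : ℝ≥0∞)⁻¹ • Measure.dirac (1 : ℝ) + (2 : ℝ≥0∞)⁻¹ • Measure.dirac (-1 : ℝ)

/-- first time the quadratic variation reaches `n`. -/
def sigR (s : ℕ → ℝ) (n : ℕ) : ℕ := sInf {k | (n : ℝ) ≤ qvR s k}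

namespace SFP

variable {s : ℕ → ℝ}

lemma qvR_zero : qvR s 0 = 0 := by simp [qvR]

lemma qvR_succ (n : ℕ) : qvR s (n + 1) = qvR s n + (s (n + 1) - s n) ^ 2 :=
  Finset.sum_range_succ _ n

lemma qvR_mono : Monotone (qvR s) := by
  intro a b hab
  exact Finset.sum_le_sum_of_subset_of_nonneg (Finset.range_subset_range.2 hab)
    (fun i _ _ => sq_nonneg _)

lemma sq_step (hs : SkipFreePathR s) (n : ℕ) :
    (s (n + 1) - s n) ^ 2 = 0 ∨ (s (n + 1) - s n) ^ 2 = 1 := by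
  rcases hs.2 n with h | h | h <;> rw [h] <;> norm_num

lemma qvR_step (hs : SkipFreePathR s) (n : ℕ) :
    qvR s (n + 1) = qvR s n ∨ qvR s (n + 1) = qvR s n + 1 := by
  rcases sq_step hs n with h | h
  · left; rw [qvR_succ, h, add_zero]
  · right; rw [qvR_succ, h]

lemma qvR_nat (hs : SkipFreePathR s) (n : ℕ) : ∃ m : ℕ, qvR s n = (m : ℝ) := by
  induction n with
  | zero => exact ⟨0, by simp [qvR_zero]⟩
  | succ n ih =>
    obtain ⟨m, hm⟩ := ih
    rcases qvR_step hs n with h | h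
    · exact ⟨m, by rw [h, hm]⟩
    · exact ⟨m + 1, by rw [h, hm]; push_cast; ring⟩

variable (hdiv : Tendsto (qvR s) atTop atTop)
include hdiv

lemma set_nonempty (n : ℕ) : {k | (n : ℝ) ≤ qvR s k}.Nonempty := by
  obtain ⟨k, hk⟩ := (hdiv.eventually_ge_atTop (n : ℝ)).exists
  exact ⟨k, hk⟩

lemma le_qvR_sigR (n : ℕ) : (n : ℝ) ≤ qvR s (sigR s n) :=
  Nat.sInf_mem (set_nonempty hdiv n)

lemma sigR_le_iff {n k : ℕ} : sigR s n ≤ k ↔ (n : ℝ) ≤ qvR s k := by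
  constructor
  · intro h
    exact le_trans (le_qvR_sigR hdiv n) (qvR_mono h)
  · intro h
    exact Nat.sInf_le h

include hdiv in
lemma qvR_sigR (hs : SkipFreePathR s) (n : ℕ) : qvR s (sigR s n) = (n : ℝ) := by
  rcases Nat.eq_zero_or_eq_succ_pred (sigR s n) with h0 | hsucc
  · have h1 := le_qvR_sigR hdiv n
    rw [h0, qvR_zero] at h1 ⊢
    have : n = 0 := by exact_mod_cast le_antisymm (by exact_mod_cast h1) (Nat.zero_le n)
    simp [this]
  · set m := sigR s n - 1 with hm
    have hsucc' : sigR s n = m + 1 := by omega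
    have hlt : m < sigR s n := by omega
    have hnot : ¬ ((n : ℝ) ≤ qvR s m) := by
      intro h
      have h2 : sigR s n ≤ m := Nat.sInf_le h
      omega
    push_neg at hnot
    have hstep : qvR s (sigR s n) ≤ qvR s m + 1 := by
      rw [hsucc']
      rcases qvR_step hs m with h | h <;> rw [h] <;> linarith
    have hge := le_qvR_sigR hdiv n
    obtain ⟨j, hj⟩ := qvR_nat hs (sigR s n)
    rw [hj] at hge hstep ⊢
    have : (j : ℝ) < n + 1 := lt_of_le_of_lt hstep (by linarith)
    have h1 : j < n + 1 := by exact_mod_cast this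
    have h2 : n ≤ j := by exact_mod_cast hge
    have : j = n := by omega
    simp [this]

lemma sigR_lt_sigR (hs : SkipFreePathR s) (n : ℕ) : sigR s n < sigR s (n + 1) := by
  by_contra h
  push_neg at h
  have h1 := qvR_sigR hdiv hs n
  have h2 := qvR_sigR hdiv hs (n + 1)
  have := qvR_mono (s := s) h
  rw [h1, h2] at this
  push_cast at this
  linarith

lemma tauR_eq_sigR (hs : SkipFreePathR s) (n : ℕ) : tauR s n = sigR s n := by
  induction n with
  | zero =>
    have h0 : (0 : ℕ) ∈ {k | ((0 : ℕ) : ℝ) ≤ qvR s k} := by simp [qvR_zero]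
    have : sigR s 0 = 0 := Nat.sInf_eq_zero.2 (Or.inl h0)
    rw [this]; rfl
  | succ n ih =>
    have hmem : sigR s (n + 1) ∈ {k | tauR s n < k ∧ qvR s k = ((n : ℝ) + 1)} := by
      refine ⟨by rw [ih]; exact sigR_lt_sigR hdiv hs n, ?_⟩
      have := qvR_sigR hdiv hs (n + 1); push_cast at this; exact this
    have hlb : ∀ k ∈ {k | tauR s n < k ∧ qvR s k = ((n : ℝ) + 1)}, sigR s (n + 1) ≤ k := by
      intro k hk
      refine (sigR_le_iff hdiv).2 ?_
      rw [hk.2]; push_cast; exact le_rfl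
    have hinf : sInf {k | tauR s n < k ∧ qvR s k = ((n : ℝ) + 1)} = sigR s (n + 1) :=
      le_antisymm (Nat.sInf_le hmem) (le_csInf ⟨_, hmem⟩ hlb)
    show max (tauR s n) _ = _
    rw [hinf, ih]
    exact max_eq_right (le_of_lt (sigR_lt_sigR hdiv hs n))

lemma qvR_between (hs : SkipFreePathR s) {n j : ℕ} (h1 : sigR s n ≤ j)
    (h2 : j < sigR s (n + 1)) : qvR s j = (n : ℝ) := by
  have hge : (n : ℝ) ≤ qvR s j := (sigR_le_iff hdiv).1 h1
  have hlt : ¬ ((n + 1 : ℕ) : ℝ) ≤ qvR s j := fun h => absurd ((sigR_le_iff hdiv).2 h) (by omega)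
  push_neg at hlt
  obtain ⟨m, hm⟩ := qvR_nat hs j
  rw [hm] at hge hlt ⊢
  push_cast at hlt
  have h1' : n ≤ m := by exact_mod_cast hge
  have h2' : m < n + 1 := by exact_mod_cast hlt
  have : m = n := by omega
  simp [this]

lemma const_between (hs : SkipFreePathR s) {n j : ℕ} (h1 : sigR s n ≤ j)
    (h2 : j < sigR s (n + 1)) : s j = s (sigR s n) := by
  induction j with
  | zero =>
    have : sigR s n = 0 := Nat.le_zero.1 h1
    rw [this]
  | succ j ih =>
    rcases Nat.lt_or_ge (sigR s n) (j + 1) with h | h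
    · have hj1 : sigR s n ≤ j := by omega
      have hj2 : j < sigR s (n + 1) := by omega
      have hq1 : qvR s j = (n : ℝ) := qvR_between hdiv hs hj1 hj2
      have hq2 : qvR s (j + 1) = (n : ℝ) := qvR_between hdiv hs (by omega) h2
      have : (s (j + 1) - s j) ^ 2 = 0 := by
        have := qvR_succ (s := s) j; rw [hq1, hq2] at this; linarith
      have hz : s (j + 1) - s j = 0 := by
        have := sq_eq_zero_iff.1 this; exact this
      rw [← ih hj1 hj2]; linarith
    · have : sigR s n = j + 1 := by omega
      rw [this]

lemma jump (hs : SkipFreePathR s) (n : ℕ) :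
    s (sigR s (n + 1)) - s (sigR s n) = 1 ∨ s (sigR s (n + 1)) - s (sigR s n) = -1 := by
  set m := sigR s (n + 1) with hmdef
  have hlt : sigR s n < m := sigR_lt_sigR hdiv hs n
  have hm1 : m - 1 < m := by omega
  have hm1' : sigR s n ≤ m - 1 := by omega
  have hconst : s (m - 1) = s (sigR s n) := const_between hdiv hs hm1' hm1
  have hq1 : qvR s (m - 1) = (n : ℝ) := qvR_between hdiv hs hm1' hm1
  have hq2 : qvR s m = ((n + 1 : ℕ) : ℝ) := qvR_sigR hdiv hs (n + 1)
  have hmeq : m - 1 + 1 = m := by omega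
  have hsq : (s m - s (m - 1)) ^ 2 = 1 := by
    have := qvR_succ (s := s) (m - 1)
    rw [hmeq, hq1, hq2] at this
    push_cast at this; linarith
  rcases hs.2 (m - 1) with h | h | h
  · left; rw [hmeq] at h; rw [← hconst]; linarith
  · exfalso; rw [hmeq] at h; rw [h] at hsq; norm_num at hsq
  · right; rw [hmeq] at h; rw [← hconst]; linarith

lemma sum_formula (hs : SkipFreePathR s) (n K : ℕ) :
    ∑ k ∈ Finset.range K, (if qvR s k = (n : ℝ) then s (k + 1) - s k else 0)
      = s (min K (sigR s (n + 1))) - s (min K (sigR s n)) := by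
  classical
  rw [← Finset.sum_filter]
  have hset : (Finset.range K).filter (fun k => qvR s k = (n : ℝ)) =
      Finset.Ico (min K (sigR s n)) (min K (sigR s (n + 1))) := by
    ext k
    simp only [Finset.mem_filter, Finset.mem_range, Finset.mem_Ico]
    constructor
    · rintro ⟨hkK, hq⟩
      have h1 : sigR s n ≤ k := (sigR_le_iff hdiv).2 (by rw [hq])
      have h2 : k < sigR s (n + 1) := by
        by_contra hcon; push_neg at hcon
        have hle := (sigR_le_iff hdiv (n := n + 1)).1 hcon
        rw [hq] at hle; push_cast at hle; linarith
      exact ⟨le_trans (min_le_right _ _) h1, lt_min hkK h2⟩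
    · rintro ⟨h1, h2⟩
      have hkK : k < K := lt_of_lt_of_le h2 (min_le_left _ _)
      have hk2 : k < sigR s (n + 1) := lt_of_lt_of_le h2 (min_le_right _ _)
      have hk1 : sigR s n ≤ k := by
        rcases le_or_gt (sigR s n) k with h | h
        · exact h
        · exfalso
          rcases min_cases K (sigR s n) with ⟨hm, hm2⟩ | ⟨hm, hm2⟩ <;> omega
      exact ⟨hkK, qvR_between hdiv hs hk1 hk2⟩
  rw [hset, Finset.sum_Ico_eq_sub _
    (min_le_min le_rfl (le_of_lt (sigR_lt_sigR hdiv hs n))),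
    Finset.sum_range_sub (f := s), Finset.sum_range_sub (f := s)]
  ring

lemma bound_formula (hs : SkipFreePathR s) (n K : ℕ) :
    |s (min K (sigR s (n + 1))) - s (min K (sigR s n))| ≤ 1 := by
  rcases le_or_gt K (sigR s n) with h | h
  · have h1 : min K (sigR s n) = K := min_eq_left h
    have h2 : min K (sigR s (n + 1)) = K :=
      min_eq_left (le_trans h (le_of_lt (sigR_lt_sigR hdiv hs n)))
    rw [h1, h2]; simp
  · have h1 : min K (sigR s n) = sigR s n := min_eq_right (le_of_lt h)
    rw [h1]
    rcases lt_or_ge K (sigR s (n + 1)) with h2 | h2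
    · have h3 : min K (sigR s (n + 1)) = K := min_eq_left (le_of_lt h2)
      rw [h3, const_between hdiv hs (le_of_lt h) h2]
      simp
    · have h3 : min K (sigR s (n + 1)) = sigR s (n + 1) := min_eq_right h2
      rw [h3]
      rcases jump hdiv hs n with hj | hj <;> rw [hj] <;> norm_num

lemma sum_formula_of_le (hs : SkipFreePathR s) {n K : ℕ} (hK : sigR s (n + 1) ≤ K) :
    ∑ k ∈ Finset.range K, (if qvR s k = (n : ℝ) then s (k + 1) - s k else 0)
      = s (sigR s (n + 1)) - s (sigR s n) := by
  rw [sum_formula hdiv hs n K, min_eq_right hK,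
    min_eq_right (le_trans (le_of_lt (sigR_lt_sigR hdiv hs n)) hK)]

lemma sum_formula_inner (hs : SkipFreePathR s) {i n k : ℕ} (hin : i < n)
    (hq : qvR s k = (n : ℝ)) :
    ∑ j ∈ Finset.range k, (if qvR s j = (i : ℝ) then s (j + 1) - s j else 0)
      = s (sigR s (i + 1)) - s (sigR s i) := by
  have hik : sigR s (i + 1) ≤ k := by
    refine (sigR_le_iff hdiv).2 ?_
    rw [hq]; exact_mod_cast Nat.cast_le.2 (by omega : i + 1 ≤ n)
  exact sum_formula_of_le hdiv hs hik

lemma smr_incr (hs : SkipFreePathR s) (n : ℕ) :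
    SMR s (n + 1) - SMR s n = s (sigR s (n + 1)) - s (sigR s n) := by
  unfold SMR
  rw [tauR_eq_sigR hdiv hs, tauR_eq_sigR hdiv hs]

end SFP

section Prob

variable {Ω : Type*} {m0 : MeasurableSpace Ω}

lemma nat_sInf_eq_iff {S : Set ℕ} {k : ℕ} :
    sInf S = k ↔ (∀ j < k, j ∉ S) ∧ (k ∈ S ∨ (k = 0 ∧ ∀ j, j ∉ S)) := by
  constructor
  · intro h
    refine ⟨fun j hj hjS => absurd (Nat.sInf_le hjS) (by omega), ?_⟩
    by_cases hne : S.Nonempty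
    · left; rw [← h]; exact Nat.sInf_mem hne
    · right
      rw [Set.not_nonempty_iff_eq_empty] at hne
      subst hne
      simp only [Nat.sInf_empty] at h
      exact ⟨h.symm, fun j => Set.notMem_empty j⟩
  · rintro ⟨hlt, hk | ⟨hk0, hempty⟩⟩
    · refine le_antisymm (Nat.sInf_le hk) ?_
      by_contra hcon
      push_neg at hcon
      exact hlt _ hcon (Nat.sInf_mem ⟨k, hk⟩)
    · have : S = ∅ := Set.eq_empty_iff_forall_notMem.2 hempty
      rw [this, Nat.sInf_empty, hk0]

lemma measurable_qvP {M : ℕ → Ω → ℝ} (hM : ∀ k, Measurable (M k)) (k : ℕ) :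
    Measurable fun ω => qvR (fun j => M j ω) k := by
  unfold qvR
  exact Finset.measurable_sum _ fun j _ => ((hM (j + 1)).sub (hM j)).pow_const 2

lemma measurable_sigP {M : ℕ → Ω → ℝ} (hM : ∀ k, Measurable (M k)) (m : ℕ) :
    Measurable fun ω => sigR (fun j => M j ω) m := by
  have hqv := measurable_qvP hM
  apply measurable_to_countable'
  intro k
  have hpre : (fun ω => sigR (fun j => M j ω) m) ⁻¹' {k} =
      (⋂ j ∈ Set.Iio k, {ω | (m : ℝ) ≤ qvR (fun i => M i ω) j}ᶜ) ∩
        ({ω | (m : ℝ) ≤ qvR (fun i => M i ω) k} ∪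
          (⋂ j, {ω | (m : ℝ) ≤ qvR (fun i => M i ω) j}ᶜ) ∩ (if k = 0 then Set.univ else ∅)) := by
    ext ω
    simp only [Set.mem_preimage, Set.mem_singleton_iff, Set.mem_inter_iff, Set.mem_iInter,
      Set.mem_compl_iff, Set.mem_setOf_eq, Set.mem_union, Set.mem_Iio]
    rw [sigR, nat_sInf_eq_iff]
    constructor
    · rintro ⟨h1, h2 | ⟨hk0, h3⟩⟩
      · exact ⟨fun j hj => h1 j hj, Or.inl h2⟩
      · exact ⟨fun j hj => h1 j hj, Or.inr ⟨fun j => h3 j, by simp [hk0]⟩⟩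
    · rintro ⟨h1, h2 | ⟨h3, h4⟩⟩
      · exact ⟨fun j hj => h1 j hj, Or.inl h2⟩
      · refine ⟨fun j hj => h1 j hj, Or.inr ⟨?_, fun j => h3 j⟩⟩
        by_contra hk0
        simp [hk0] at h4
  rw [hpre]
  have hms : ∀ j, MeasurableSet {ω | (m : ℝ) ≤ qvR (fun i => M i ω) j} := fun j =>
    measurableSet_le measurable_const (hqv j)
  refine MeasurableSet.inter (MeasurableSet.biInter (Set.to_countable _)
    fun j _ => (hms j).compl) (MeasurableSet.union (hms k) (MeasurableSet.inter
      (MeasurableSet.iInter fun j => (hms j).compl) ?_))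
  by_cases hk0 : k = 0 <;> simp [hk0]

lemma measurable_XP {M : ℕ → Ω → ℝ} (hM : ∀ k, Measurable (M k)) (n : ℕ) :
    Measurable fun ω =>
      M (sigR (fun j => M j ω) (n + 1)) ω - M (sigR (fun j => M j ω) n) ω := by
  have huncurry : Measurable fun p : Ω × ℕ => M p.2 p.1 :=
    measurable_from_prod_countable_left fun k => hM k
  have h1 : Measurable fun ω => M (sigR (fun j => M j ω) (n + 1)) ω :=
    huncurry.comp (measurable_id.prodMk (measurable_sigP hM (n + 1)))
  have h2 : Measurable fun ω => M (sigR (fun j => M j ω) n) ω :=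
    huncurry.comp (measurable_id.prodMk (measurable_sigP hM n))
  exact h1.sub h2

end Prob

section Prob2

open MeasureTheory
open scoped Topology Classical

variable {Ω : Type*} {m0 : MeasurableSpace Ω} {P : Measure Ω} [IsProbabilityMeasure P]

/-- The `n`-th increment of the time-changed process, written with `sigR`. -/
def XPf (M : ℕ → Ω → ℝ) (n : ℕ) (ω : Ω) : ℝ :=
  M (sigR (fun j => M j ω) (n + 1)) ω - M (sigR (fun j => M j ω) n) ω

lemma measurable_XPf {M : ℕ → Ω → ℝ} (hM : ∀ k, Measurable (M k)) (n : ℕ) :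
    Measurable (XPf M n) := measurable_XP hM n

/-- The partial martingale-transform approximation to the `i`-th time-changed increment. -/
def YPf (M : ℕ → Ω → ℝ) (i K : ℕ) (ω : Ω) : ℝ :=
  ∑ j ∈ Finset.range K, (if qvR (fun l => M l ω) j = (i : ℝ) then M (j + 1) ω - M j ω else 0)

theorem key_integral {ℱ : Filtration ℕ m0} {M : ℕ → Ω → ℝ}
    (hskip : ∀ ω, SkipFreePathR (fun n => M n ω))
    (hmart : Martingale M ℱ P)
    (hqv_adapted : Adapted ℱ (fun n ω => qvR (fun k => M k ω) n))
    (hdiv : ∀ᵐ ω ∂P, Tendsto (fun n => qvR (fun k => M k ω) n) atTop atTop)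
    (n : ℕ) (T : Finset ℕ) (hT : ∀ i ∈ T, i < n) (B : ℕ → Set ℝ)
    (hB : ∀ i, MeasurableSet (B i)) :
    ∫ ω in ⋂ i ∈ T, XPf M i ⁻¹' B i, XPf M n ω ∂P = 0 := by
  classical
  have hMmeas : ∀ k, Measurable (M k) := fun k =>
    ((hmart.stronglyAdapted k).measurable).mono (ℱ.le k) le_rfl
  set A : Set Ω := ⋂ i ∈ T, XPf M i ⁻¹' B i with hA
  have hAmeas : MeasurableSet A :=
    MeasurableSet.biInter (Finset.countable_toSet T) fun i _ => (measurable_XPf hMmeas i) (hB i)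
  set C : ℕ → Set Ω := fun k =>
    {ω | qvR (fun j => M j ω) k = (n : ℝ)} ∩ ⋂ i ∈ T, YPf M i k ⁻¹' B i with hC
  have hCmeas : ∀ k, MeasurableSet[ℱ k] (C k) := by
    intro k
    refine MeasurableSet.inter ((hqv_adapted k) (measurableSet_singleton _)) ?_
    refine MeasurableSet.biInter (Finset.countable_toSet T) fun i _ => ?_
    have hY : Measurable[ℱ k] (YPf M i k) := by
      refine Finset.measurable_sum _ fun j hj => ?_
      have hjk : j < k := Finset.mem_range.1 hj
      have h1 : Measurable[ℱ k] fun ω => qvR (fun l => M l ω) j :=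
        (hqv_adapted j).mono (ℱ.mono hjk.le) le_rfl
      have h2 : Measurable[ℱ k] (M (j + 1)) :=
        ((hmart.stronglyAdapted (j + 1)).measurable).mono (ℱ.mono hjk) le_rfl
      have h3 : Measurable[ℱ k] (M j) :=
        ((hmart.stronglyAdapted j).measurable).mono (ℱ.mono hjk.le) le_rfl
      exact Measurable.ite (h1 (measurableSet_singleton _)) (h2.sub h3) measurable_const
    exact hY (hB i)
  set Z : ℕ → Ω → ℝ := fun K ω =>
    ∑ k ∈ Finset.range K, Set.indicator (C k) (fun ω => M (k + 1) ω - M k ω) ω with hZ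
  have hZint : ∀ k, Integrable (Set.indicator (C k) fun ω => M (k + 1) ω - M k ω) P :=
    fun k => (((hmart.integrable (k + 1)).sub (hmart.integrable k)).indicator
      (ℱ.le k _ (hCmeas k)))
  have hEzero : ∀ K, ∫ ω, Z K ω ∂P = 0 := by
    intro K
    rw [hZ]
    rw [integral_finset_sum _ fun k _ => hZint k]
    refine Finset.sum_eq_zero fun k _ => ?_
    rw [integral_indicator (ℱ.le k _ (hCmeas k))]
    rw [integral_sub ((hmart.integrable (k + 1)).integrableOn) ((hmart.integrable k).integrableOn)]
    rw [← hmart.setIntegral_eq (Nat.le_succ k) (hCmeas k), sub_self]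
  -- pointwise description of `Z K ω` on divergent paths
  have hZeq : ∀ᵐ ω ∂P, ∀ K, Z K ω = (if ω ∈ A then (1 : ℝ) else 0) *
      (M (min K (sigR (fun j => M j ω) (n + 1))) ω - M (min K (sigR (fun j => M j ω) n)) ω) := by
    filter_upwards [hdiv] with ω hω
    intro K
    have hs := hskip ω
    have hterm : ∀ k, Set.indicator (C k) (fun ω => M (k + 1) ω - M k ω) ω =
        (if ω ∈ A then (1 : ℝ) else 0) *
          (if qvR (fun j => M j ω) k = (n : ℝ) then M (k + 1) ω - M k ω else 0) := by
      intro k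
      by_cases hqk : qvR (fun j => M j ω) k = (n : ℝ)
      · have hYX : ∀ i ∈ T, YPf M i k ω = XPf M i ω := by
          intro i hi
          have := SFP.sum_formula_inner hω hs (hT i hi) hqk
          exact this
        by_cases hmem : ω ∈ A
        · have hCk : ω ∈ C k := by
            refine ⟨hqk, ?_⟩
            rw [Set.mem_iInter₂]
            intro i hi
            have : XPf M i ω ∈ B i := by
              rw [hA, Set.mem_iInter₂] at hmem
              exact hmem i hi
            simpa [Set.mem_preimage, hYX i hi] using this
          rw [Set.indicator_of_mem hCk]
          simp [hqk, hmem]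
        · have hCk : ω ∉ C k := by
            intro hck
            apply hmem
            rw [hA, Set.mem_iInter₂]
            intro i hi
            have := hck.2
            rw [Set.mem_iInter₂] at this
            have h4 := this i hi
            rw [Set.mem_preimage, hYX i hi] at h4
            exact h4
          rw [Set.indicator_of_notMem hCk]
          simp [hmem]
      · have hCk : ω ∉ C k := fun hck => hqk hck.1
        rw [Set.indicator_of_notMem hCk]
        simp [hqk]
    calc Z K ω = (if ω ∈ A then (1 : ℝ) else 0) * ∑ k ∈ Finset.range K,
        (if qvR (fun j => M j ω) k = (n : ℝ) then M (k + 1) ω - M k ω else 0) := by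
          rw [hZ, Finset.mul_sum]
          exact Finset.sum_congr rfl fun k _ => hterm k
      _ = _ := by rw [SFP.sum_formula hω hs n K]
  have hlim : ∀ᵐ ω ∂P, Tendsto (fun K => Z K ω) atTop (𝓝 (Set.indicator A (XPf M n) ω)) := by
    filter_upwards [hdiv, hZeq] with ω hω hZω
    apply tendsto_atTop_of_eventually_const (i₀ := sigR (fun j => M j ω) (n + 1))
    intro K hK
    rw [hZω K, min_eq_right hK,
      min_eq_right (le_trans (SFP.sigR_lt_sigR hω (hskip ω) n).le hK)]
    by_cases hmem : ω ∈ A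
    · rw [Set.indicator_of_mem hmem]
      simp [hmem, XPf]
    · rw [Set.indicator_of_notMem hmem]
      simp [hmem]
  have hbound : ∀ K, ∀ᵐ ω ∂P, ‖Z K ω‖ ≤ (1 : ℝ) := by
    intro K
    filter_upwards [hdiv, hZeq] with ω hω hZω
    rw [hZω K]
    rw [Real.norm_eq_abs, abs_mul]
    have h1 : |if ω ∈ A then (1 : ℝ) else 0| ≤ 1 := by
      by_cases hmem : ω ∈ A <;> simp [hmem]
    have h2 := SFP.bound_formula hω (hskip ω) n K
    calc |if ω ∈ A then (1 : ℝ) else 0| * _ ≤ 1 * 1 := by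
          exact mul_le_mul h1 h2 (abs_nonneg _) zero_le_one
      _ = 1 := mul_one 1
  have hZmeas : ∀ K, AEStronglyMeasurable (Z K) P := by
    intro K
    refine (Finset.measurable_sum _ fun k _ => ?_).aestronglyMeasurable
    exact ((hMmeas (k + 1)).sub (hMmeas k)).indicator (ℱ.le k _ (hCmeas k))
  have hDCT := tendsto_integral_of_dominated_convergence (μ := P) (F := Z)
    (f := Set.indicator A (XPf M n)) (fun _ => (1 : ℝ)) hZmeas (integrable_const 1) hbound hlim
  have hconst : Tendsto (fun K => ∫ ω, Z K ω ∂P) atTop (𝓝 0) := by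
    simp only [hEzero]
    exact tendsto_const_nhds
  have hfin : ∫ ω, Set.indicator A (XPf M n) ω ∂P = 0 := tendsto_nhds_unique hDCT hconst
  rw [← integral_indicator hAmeas]
  exact hfin

theorem half_measure {ℱ : Filtration ℕ m0} {M : ℕ → Ω → ℝ}
    (hskip : ∀ ω, SkipFreePathR (fun n => M n ω))
    (hmart : Martingale M ℱ P)
    (hqv_adapted : Adapted ℱ (fun n ω => qvR (fun k => M k ω) n))
    (hdiv : ∀ᵐ ω ∂P, Tendsto (fun n => qvR (fun k => M k ω) n) atTop atTop)
    (n : ℕ) (T : Finset ℕ) (hT : ∀ i ∈ T, i < n) (B : ℕ → Set ℝ)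
    (hB : ∀ i, MeasurableSet (B i)) :
    P ((⋂ i ∈ T, XPf M i ⁻¹' B i) ∩ XPf M n ⁻¹' {(1 : ℝ)})
        = 2⁻¹ * P (⋂ i ∈ T, XPf M i ⁻¹' B i) ∧
      P ((⋂ i ∈ T, XPf M i ⁻¹' B i) ∩ XPf M n ⁻¹' {(-1 : ℝ)})
        = 2⁻¹ * P (⋂ i ∈ T, XPf M i ⁻¹' B i) := by
  classical
  have hMmeas : ∀ k, Measurable (M k) := fun k =>
    ((hmart.stronglyAdapted k).measurable).mono (ℱ.le k) le_rfl
  set A : Set Ω := ⋂ i ∈ T, XPf M i ⁻¹' B i with hA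
  have hAmeas : MeasurableSet A :=
    MeasurableSet.biInter (Finset.countable_toSet T) fun i _ => (measurable_XPf hMmeas i) (hB i)
  have hkey := key_integral hskip hmart hqv_adapted hdiv n T hT B hB
  rw [← hA] at hkey
  have hsign : ∀ᵐ ω ∂P, XPf M n ω = 1 ∨ XPf M n ω = -1 := by
    filter_upwards [hdiv] with ω hω
    exact SFP.jump hω (hskip ω) n
  have hXmeas := measurable_XPf hMmeas n
  have hXint : Integrable (XPf M n) P := by
    refine Integrable.mono' (integrable_const (1 : ℝ)) hXmeas.aestronglyMeasurable ?_
    filter_upwards [hsign] with ω h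
    rcases h with h | h <;> rw [Real.norm_eq_abs, h] <;> norm_num
  have hcompute : ∀ c : ℝ, c = 1 ∨ c = -1 →
      (P (A ∩ XPf M n ⁻¹' {c})).toReal = (P A).toReal / 2 := by
    intro c hc
    have hmeas1 : MeasurableSet (A ∩ XPf M n ⁻¹' {c}) :=
      hAmeas.inter (hXmeas (measurableSet_singleton _))
    have e1 : ∫ ω, Set.indicator (A ∩ XPf M n ⁻¹' {c}) (fun _ => (1 : ℝ)) ω ∂P
        = (P (A ∩ XPf M n ⁻¹' {c})).toReal := by
      rw [integral_indicator_const (1 : ℝ) hmeas1]; simp [Measure.real]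
    have e2 : Set.indicator (A ∩ XPf M n ⁻¹' {c}) (fun _ => (1 : ℝ)) =ᵐ[P]
        Set.indicator A (fun ω => (1 + c * XPf M n ω) / 2) := by
      filter_upwards [hsign] with ω h
      by_cases hmem : ω ∈ A
      · by_cases hx : XPf M n ω = c
        · have hin : ω ∈ A ∩ XPf M n ⁻¹' {c} := ⟨hmem, by simp [hx]⟩
          rw [Set.indicator_of_mem hin, Set.indicator_of_mem hmem, hx]
          rcases hc with h1 | h1 <;> rw [h1] <;> norm_num
        · have hnin : ω ∉ A ∩ XPf M n ⁻¹' {c} := by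
            intro hcon
            exact hx hcon.2
          rw [Set.indicator_of_notMem hnin, Set.indicator_of_mem hmem]
          rcases h with h2 | h2 <;> rcases hc with h1 | h1 <;>
            first
              | (exfalso; rw [h2, h1] at hx; exact hx rfl)
              | (rw [h2, h1]; norm_num)
      · have hnin : ω ∉ A ∩ XPf M n ⁻¹' {c} := fun hcon => hmem hcon.1
        rw [Set.indicator_of_notMem hnin, Set.indicator_of_notMem hmem]
    have e3 : ∫ ω, Set.indicator A (fun ω => (1 + c * XPf M n ω) / 2) ω ∂P
        = (P A).toReal / 2 := by
      rw [integral_indicator hAmeas]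
      rw [integral_div]
      rw [integral_add (integrable_const (1 : ℝ)).integrableOn
        ((hXint.const_mul c).integrableOn)]
      rw [integral_const_mul, hkey, setIntegral_const]
      simp [Measure.real]
    rw [← e1, integral_congr_ae e2, e3]
  have hfin : ∀ c : ℝ, c = 1 ∨ c = -1 →
      P (A ∩ XPf M n ⁻¹' {c}) = 2⁻¹ * P A := by
    intro c hc
    have hne1 : P (A ∩ XPf M n ⁻¹' {c}) ≠ ⊤ := measure_ne_top P _
    have hne2 : 2⁻¹ * P A ≠ ⊤ :=
      ENNReal.mul_ne_top (by norm_num) (measure_ne_top P _)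
    apply (ENNReal.toReal_eq_toReal_iff' hne1 hne2).1
    rw [hcompute c hc, ENNReal.toReal_mul]
    rw [ENNReal.toReal_inv]
    norm_num
    ring
  exact ⟨hfin 1 (Or.inl rfl), hfin (-1) (Or.inr rfl)⟩

theorem law_measure {ℱ : Filtration ℕ m0} {M : ℕ → Ω → ℝ}
    (hskip : ∀ ω, SkipFreePathR (fun n => M n ω))
    (hmart : Martingale M ℱ P)
    (hqv_adapted : Adapted ℱ (fun n ω => qvR (fun k => M k ω) n))
    (hdiv : ∀ᵐ ω ∂P, Tendsto (fun n => qvR (fun k => M k ω) n) atTop atTop)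
    (n : ℕ) {B : Set ℝ} (hB : MeasurableSet B) :
    P (XPf M n ⁻¹' B) =
      (if (1 : ℝ) ∈ B then (2⁻¹ : ℝ≥0∞) else 0) + (if (-1 : ℝ) ∈ B then (2⁻¹ : ℝ≥0∞) else 0) := by
  classical
  have hsign : ∀ᵐ ω ∂P, XPf M n ω = 1 ∨ XPf M n ω = -1 := by
    filter_upwards [hdiv] with ω hω
    exact SFP.jump hω (hskip ω) n
  have hhalf := half_measure hskip hmart hqv_adapted hdiv n ∅ (by simp)
    (fun _ => Set.univ) (fun _ => MeasurableSet.univ)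
  simp only [Finset.notMem_empty, Set.iInter_of_empty, Set.iInter_univ, Set.univ_inter,
    measure_univ, mul_one] at hhalf
  obtain ⟨h1, h2⟩ := hhalf
  by_cases hb1 : (1 : ℝ) ∈ B <;> by_cases hb2 : (-1 : ℝ) ∈ B
  · have hcong : XPf M n ⁻¹' B =ᵐ[P] (Set.univ : Set Ω) := by
      rw [Filter.eventuallyEq_set]
      filter_upwards [hsign] with ω h
      simp only [Set.mem_preimage, Set.mem_univ, iff_true]
      rcases h with h | h <;> rw [h] <;> assumption
    rw [measure_congr hcong, measure_univ]
    rw [if_pos hb1, if_pos hb2, ENNReal.inv_two_add_inv_two]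
  · have hcong : XPf M n ⁻¹' B =ᵐ[P] XPf M n ⁻¹' {(1 : ℝ)} := by
      rw [Filter.eventuallyEq_set]
      filter_upwards [hsign] with ω h
      simp only [Set.mem_preimage, Set.mem_singleton_iff]
      rcases h with h | h <;> rw [h] <;> simp [hb1, hb2] <;> norm_num
    rw [measure_congr hcong, h1, if_pos hb1, if_neg hb2, add_zero]
  · have hcong : XPf M n ⁻¹' B =ᵐ[P] XPf M n ⁻¹' {(-1 : ℝ)} := by
      rw [Filter.eventuallyEq_set]
      filter_upwards [hsign] with ω h
      simp only [Set.mem_preimage, Set.mem_singleton_iff]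
      rcases h with h | h <;> rw [h] <;> simp [hb1, hb2] <;> norm_num
    rw [measure_congr hcong, h2, if_neg hb1, if_pos hb2, zero_add]
  · have hcong : XPf M n ⁻¹' B =ᵐ[P] (∅ : Set Ω) := by
      rw [Filter.eventuallyEq_set]
      filter_upwards [hsign] with ω h
      simp only [Set.mem_preimage, Set.mem_empty_iff_false, iff_false]
      rcases h with h | h <;> rw [h] <;> assumption
    rw [measure_congr hcong, measure_empty, if_neg hb1, if_neg hb2, add_zero]

theorem prod_measure {ℱ : Filtration ℕ m0} {M : ℕ → Ω → ℝ}
    (hskip : ∀ ω, SkipFreePathR (fun n => M n ω))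
    (hmart : Martingale M ℱ P)
    (hqv_adapted : Adapted ℱ (fun n ω => qvR (fun k => M k ω) n))
    (hdiv : ∀ᵐ ω ∂P, Tendsto (fun n => qvR (fun k => M k ω) n) atTop atTop) :
    ∀ (N : ℕ) (S : Finset ℕ), S ⊆ Finset.range N →
      ∀ B : ℕ → Set ℝ, (∀ i, MeasurableSet (B i)) →
      P (⋂ i ∈ S, XPf M i ⁻¹' B i) = ∏ i ∈ S, P (XPf M i ⁻¹' B i) := by
  classical
  intro N
  induction N with
  | zero =>
    intro S hS B hB
    have hSempty : S = ∅ := Finset.subset_empty.1 (by simpa using hS)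
    subst hSempty
    simp
  | succ N ih =>
    intro S hS B hB
    by_cases hN : N ∈ S
    · have hS' : S.erase N ⊆ Finset.range N := by
        intro i hi
        have h1 := hS (Finset.erase_subset _ _ hi)
        have h2 := Finset.ne_of_mem_erase hi
        simp only [Finset.mem_range] at h1 ⊢
        omega
      have hT : ∀ i ∈ S.erase N, i < N := fun i hi => Finset.mem_range.1 (hS' hi)
      have hins : insert N (S.erase N) = S := Finset.insert_erase hN
      rw [← hins, Finset.set_biInter_insert, Finset.prod_insert (Finset.notMem_erase _ _)]
      set A : Set Ω := ⋂ i ∈ S.erase N, XPf M i ⁻¹' B i with hAdef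
      have IH := ih (S.erase N) hS' B hB
      rw [← hAdef] at IH
      have hhalf := half_measure hskip hmart hqv_adapted hdiv N (S.erase N) hT B hB
      rw [← hAdef] at hhalf
      have hlaw := law_measure hskip hmart hqv_adapted hdiv N (hB N)
      have hsign : ∀ᵐ ω ∂P, XPf M N ω = 1 ∨ XPf M N ω = -1 := by
        filter_upwards [hdiv] with ω hω
        exact SFP.jump hω (hskip ω) N
      rw [Set.inter_comm]
      by_cases hb1 : (1 : ℝ) ∈ B N <;> by_cases hb2 : (-1 : ℝ) ∈ B N
      · have hcong : (A ∩ XPf M N ⁻¹' B N : Set Ω) =ᵐ[P] A := by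
          rw [Filter.eventuallyEq_set]
          filter_upwards [hsign] with ω h
          simp only [Set.mem_inter_iff, Set.mem_preimage, and_iff_left_iff_imp]
          intro _
          rcases h with h | h <;> rw [h] <;> assumption
        rw [measure_congr hcong, IH, hlaw, if_pos hb1, if_pos hb2,
          ENNReal.inv_two_add_inv_two, one_mul]
      · have hcong : (A ∩ XPf M N ⁻¹' B N : Set Ω) =ᵐ[P] (A ∩ XPf M N ⁻¹' {(1 : ℝ)} : Set Ω) := by
          rw [Filter.eventuallyEq_set]
          filter_upwards [hsign] with ω h
          simp only [Set.mem_inter_iff, Set.mem_preimage, Set.mem_singleton_iff, and_congr_right_iff]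
          intro _
          rcases h with h | h <;> rw [h] <;> simp [hb1, hb2] <;> norm_num
        rw [measure_congr hcong, hhalf.1, IH, hlaw, if_pos hb1, if_neg hb2, add_zero]
      · have hcong : (A ∩ XPf M N ⁻¹' B N : Set Ω) =ᵐ[P] (A ∩ XPf M N ⁻¹' {(-1 : ℝ)} : Set Ω) := by
          rw [Filter.eventuallyEq_set]
          filter_upwards [hsign] with ω h
          simp only [Set.mem_inter_iff, Set.mem_preimage, Set.mem_singleton_iff, and_congr_right_iff]
          intro _
          rcases h with h | h <;> rw [h] <;> simp [hb1, hb2] <;> norm_num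
        rw [measure_congr hcong, hhalf.2, IH, hlaw, if_neg hb1, if_pos hb2, zero_add]
      · have hcong : (A ∩ XPf M N ⁻¹' B N : Set Ω) =ᵐ[P] (∅ : Set Ω) := by
          rw [Filter.eventuallyEq_set]
          filter_upwards [hsign] with ω h
          simp only [Set.mem_inter_iff, Set.mem_preimage, Set.mem_empty_iff_false, iff_false,
            not_and]
          intro _
          rcases h with h | h <;> rw [h] <;> assumption
        rw [measure_congr hcong, measure_empty, hlaw, if_neg hb1, if_neg hb2, add_zero,
          zero_mul]
    · refine ih S ?_ B hB
      intro i hi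
      have h1 := hS hi
      have h2 : i ≠ N := fun h => hN (h ▸ hi)
      simp only [Finset.mem_range] at h1 ⊢
      omega

end Prob2

/-- **Dambis–Dubins–Schwarz theorem for skip free martingales.** If `M` is a divergent
skip free martingale (with respect to a filtration to which its quadratic variation is
adapted), then the time-changed process `S^M = (M_{τ_n})_n` is a symmetric Bernoulli
random walk: it starts at `0` and has i.i.d. increments uniform on `{-1, +1}`. -/
theorem divergent_skip_free_martingale_time_change_is_bernoulliRW
    {Ω : Type*} {m0 : MeasurableSpace Ω} {P : Measure Ω} [IsProbabilityMeasure P]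
    (ℱ : Filtration ℕ m0) (M : ℕ → Ω → ℝ)
    (hskip : ∀ ω, SkipFreePathR (fun n => M n ω))
    (hmart : Martingale M ℱ P)
    (hqv_adapted : Adapted ℱ (fun n ω => qvR (fun k => M k ω) n))
    (hdiv : ∀ᵐ ω ∂P, Tendsto (fun n => qvR (fun k => M k ω) n) atTop atTop) :
    (∀ ω, SMR (fun k => M k ω) 0 = 0) ∧
      iIndepFun
        (fun n ω => SMR (fun k => M k ω) (n + 1) - SMR (fun k => M k ω) n) P ∧
      ∀ n, Measure.map
          (fun ω => SMR (fun k => M k ω) (n + 1) - SMR (fun k => M k ω) n) P = bernR := by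
  classical
  have hMmeas : ∀ k, Measurable (M k) := fun k =>
    ((hmart.stronglyAdapted k).measurable).mono (ℱ.le k) le_rfl
  have hXae : ∀ n, (fun ω => SMR (fun k => M k ω) (n + 1) - SMR (fun k => M k ω) n)
      =ᵐ[P] XPf M n := by
    intro n
    filter_upwards [hdiv] with ω hω
    exact SFP.smr_incr hω (hskip ω) n
  have hall : ∀ᵐ ω ∂P, ∀ i,
      SMR (fun k => M k ω) (i + 1) - SMR (fun k => M k ω) i = XPf M i ω := by
    filter_upwards [hdiv] with ω hω i
    exact SFP.smr_incr hω (hskip ω) i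
  refine ⟨?_, ?_, ?_⟩
  · intro ω
    show (fun n => M n ω) (tauR (fun n => M n ω) 0) = 0
    have h0 : tauR (fun n => M n ω) 0 = 0 := rfl
    rw [h0]
    exact (hskip ω).1
  · rw [iIndepFun_iff_measure_inter_preimage_eq_mul]
    intro S sets hsets
    set B : ℕ → Set ℝ := fun i => if i ∈ S then sets i else Set.univ with hBdef
    have hB : ∀ i, MeasurableSet (B i) := by
      intro i
      by_cases h : i ∈ S
      · simpa [hBdef, h] using hsets i h
      · simp [hBdef, h]
    obtain ⟨N, hN⟩ := Finset.exists_nat_subset_range S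
    have hprod := prod_measure hskip hmart hqv_adapted hdiv N S hN B hB
    have hLHS : P (⋂ i ∈ S,
        (fun ω => SMR (fun k => M k ω) (i + 1) - SMR (fun k => M k ω) i) ⁻¹' sets i)
        = P (⋂ i ∈ S, XPf M i ⁻¹' B i) := by
      apply measure_congr
      rw [Filter.eventuallyEq_set]
      filter_upwards [hall] with ω hω
      simp only [Set.mem_iInter, Set.mem_preimage]
      refine forall_congr' fun i => ?_
      refine forall_congr' fun hi => ?_
      rw [hω i, hBdef]
      simp [hi]
    have hRHS : ∀ i ∈ S,
        P ((fun ω => SMR (fun k => M k ω) (i + 1) - SMR (fun k => M k ω) i) ⁻¹' sets i)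
        = P (XPf M i ⁻¹' B i) := by
      intro i hi
      apply measure_congr
      rw [Filter.eventuallyEq_set]
      filter_upwards [hall] with ω hω
      simp only [Set.mem_preimage]
      rw [hω i, hBdef]
      simp [hi]
    rw [hLHS, hprod]
    exact (Finset.prod_congr rfl hRHS).symm
  · intro n
    rw [Measure.map_congr (hXae n)]
    refine Measure.ext fun s hs => ?_
    rw [Measure.map_apply (measurable_XPf hMmeas n) hs]
    rw [law_measure hskip hmart hqv_adapted hdiv n hs]
    unfold bernR
    rw [Measure.add_apply, Measure.smul_apply, Measure.smul_apply,
      Measure.dirac_apply' _ hs, Measure.dirac_apply' _ hs]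
    by_cases h1 : (1 : ℝ) ∈ s <;> by_cases h2 : (-1 : ℝ) ∈ s <;>
      simp [Set.indicator_apply, h1, h2, smul_eq_mul]
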